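/- arXiv:2503.09664 — 2 statements merged into one kernel-verified Lean document; each statement's English description precedes it below -/
import Mathlib

section
/- Fix a real number q > 1. For every integer n ≥ 0 and every integer α ≥ 1, there exists a finitely supported c : ℕ × ℕ → ℝ with c(a,b) = 0 unless a ≥ 1 or (a,b) = (0,0), whose constant coefficient is c(0,0) = ∏_{i=0}^{n−1} (1 − q^{α+i})^{−1}, and such that vol_{n,α}(x) = Σ_{(a,b)} c(a,b) · q^{a·x} · x^{b} for all integers x ≥ 1. -/
open Finset

noncomputable section

/-- `μ_m := ∏_{i=1}^{m} (1 − q⁻¹)/(1 − q^{-i})`. -/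
def mu (q : ℝ) (m : ℕ) : ℝ :=
  ∏ i ∈ Finset.range m, (1 - q⁻¹) / (1 - q ^ (-((i : ℤ) + 1)))

/-- For a weakly increasing tuple `λ`, the product `∏_j μ_{n_j}` over the lengths
`(n_1, …, n_s)` of the maximal constant segments of `λ` (equivalently, over the
cardinalities of the fibers of `λ`). -/
def typeProd (q : ℝ) {n : ℕ} (l : Fin n → ℤ) : ℝ :=
  ∏ v ∈ Finset.image l Finset.univ, mu q ((Finset.univ.filter fun i => l i = v).card)

/-- The weight `w_n(λ) := ((∏_j μ_{n_j})/μ_n) · ∏_{i<j} q^{λ_j − λ_i}`. -/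
def weight (q : ℝ) {n : ℕ} (l : Fin n → ℤ) : ℝ :=
  (typeProd q l / mu q n) *
    ∏ p ∈ Finset.univ.filter (fun p : Fin n × Fin n => p.1 < p.2), q ^ (l p.2 - l p.1)

open scoped Classical in
/-- The weakly increasing integer tuples `0 ≤ λ_1 ≤ ⋯ ≤ λ_n ≤ x`. -/
def tuples (n x : ℕ) : Finset (Fin n → ℤ) :=
  (Fintype.piFinset fun _ : Fin n => Finset.Icc (0 : ℤ) (x : ℤ)).filter Monotone

/-- `vol_{n,α}(x) := Σ_{0 ≤ λ_1 ≤ ⋯ ≤ λ_n ≤ x} q^{α(λ_1+⋯+λ_n)} · w_n(λ)`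
(for `n = 0` this is `1` by convention, the sum being over the single empty tuple). -/
def vol (q : ℝ) (n : ℕ) (α : ℤ) (x : ℕ) : ℝ :=
  ∑ l ∈ tuples n x, q ^ (α * ∑ i, l i) * weight q l

/-- The Gaussian binomial coefficient `∏_{i=1}^{β} (q^{n−β+i} − 1)/(q^{i} − 1)`. -/
def gaussBinom (q : ℝ) (n β : ℕ) : ℝ :=
  ∏ i ∈ Finset.range β, (q ^ (n - β + i + 1) - 1) / (q ^ (i + 1) - 1)

/-- Evaluation of a finitely supported family of coefficients `c : ℕ × ℕ → ℝ` as the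
`q`-quasi-polynomial `x ↦ Σ_{(a,b)} c(a,b) · q^{a·x} · x^{b}`. -/
def qQuasiEval (q : ℝ) (c : (ℕ × ℕ) →₀ ℝ) (x : ℕ) : ℝ :=
  c.sum fun p r => r * q ^ (p.1 * x) * (x : ℝ) ^ p.2

end

section Basic

variable {q : ℝ}

lemma mu_zero : mu q 0 = 1 := by simp [mu]

lemma mu_pos (hq : 1 < q) (m : ℕ) : 0 < mu q m := by
  have hq0 : 0 < q := lt_trans one_pos hq
  refine Finset.prod_pos fun i _ => div_pos ?_ ?_
  · have : q⁻¹ < 1 := inv_lt_one_of_one_lt₀ hq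
    linarith
  · have h1 : q ^ (-((i : ℤ) + 1)) = (q ^ (i + 1) : ℝ)⁻¹ := by
      rw [zpow_neg]
      norm_cast
    have h2 : (1 : ℝ) < q ^ (i + 1) := one_lt_pow₀ hq (by omega)
    rw [h1]
    have : (q ^ (i + 1) : ℝ)⁻¹ < 1 := inv_lt_one_of_one_lt₀ h2
    linarith

lemma mu_ne_zero (hq : 1 < q) (m : ℕ) : mu q m ≠ 0 := ne_of_gt (mu_pos hq m)

lemma zpow_finset_sum (hq : q ≠ 0) {β : Type*} (s : Finset β) (f : β → ℤ) :
    q ^ (∑ p ∈ s, f p) = ∏ p ∈ s, q ^ f p := by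
  classical
  induction s using Finset.cons_induction with
  | empty => simp
  | cons a s ha ih => rw [Finset.sum_cons, Finset.prod_cons, zpow_add₀ hq, ih]

lemma card_filter_lt {n : ℕ} (k : ℕ) (hk : k ≤ n) :
    ((Finset.univ : Finset (Fin n)).filter fun i : Fin n => (i : ℕ) < k).card = k := by
  have hmem : ∀ m ∈ Finset.range k, m < n := fun m hm =>
    lt_of_lt_of_le (Finset.mem_range.mp hm) hk
  have : ((Finset.univ : Finset (Fin n)).filter fun i : Fin n => (i : ℕ) < k)
      = (Finset.range k).attachFin hmem := by
    ext i
    simp [Finset.mem_attachFin]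
  rw [this, Finset.card_attachFin, Finset.card_range]

lemma card_filter_lt' {n : ℕ} (j : Fin n) :
    ((Finset.univ : Finset (Fin n)).filter fun i : Fin n => i < j).card = (j : ℕ) := by
  have : ((Finset.univ : Finset (Fin n)).filter fun i : Fin n => i < j)
      = ((Finset.univ : Finset (Fin n)).filter fun i : Fin n => (i : ℕ) < (j : ℕ)) := by
    apply Finset.filter_congr
    intro i _
    exact Iff.rfl
  rw [this, card_filter_lt _ (le_of_lt j.isLt)]

lemma card_filter_gt {n : ℕ} (i : Fin n) :
    ((Finset.univ : Finset (Fin n)).filter fun j : Fin n => i < j).card = n - ((i : ℕ) + 1) := by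
  have h := Finset.card_filter_add_card_filter_not
    (s := (Finset.univ : Finset (Fin n))) (p := fun j => i < j)
  have h2 : ((Finset.univ : Finset (Fin n)).filter fun j : Fin n => ¬ i < j).card = (i : ℕ) + 1 := by
    have : ((Finset.univ : Finset (Fin n)).filter fun j : Fin n => ¬ i < j)
        = (Finset.univ.filter fun j : Fin n => (j : ℕ) < (i : ℕ) + 1) := by
      apply Finset.filter_congr
      intro j _
      simp only [Fin.lt_def, not_lt, Nat.lt_succ_iff]
    rw [this, card_filter_lt _ i.isLt]
  simp only [Finset.card_univ, Fintype.card_fin] at h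
  omega

/-- The pair-product in `weight` as a single power of `q`. -/
lemma pair_sum {n : ℕ} (l : Fin n → ℤ) :
    ∑ p ∈ Finset.univ.filter (fun p : Fin n × Fin n => p.1 < p.2), (l p.2 - l p.1)
      = ∑ i : Fin n, (2 * (i : ℤ) + 1 - n) * l i := by
  rw [Finset.sum_sub_distrib]
  have h2 : ∑ p ∈ Finset.univ.filter (fun p : Fin n × Fin n => p.1 < p.2), l p.2
      = ∑ j : Fin n, ((j : ℕ) : ℤ) * l j := by
    rw [Finset.sum_filter, ← Finset.univ_product_univ, Finset.sum_product_right]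
    refine Finset.sum_congr rfl fun j _ => ?_
    simp only
    rw [← Finset.sum_filter, Finset.sum_const, card_filter_lt' j, nsmul_eq_mul]
  have h1 : ∑ p ∈ Finset.univ.filter (fun p : Fin n × Fin n => p.1 < p.2), l p.1
      = ∑ i : Fin n, ((n : ℤ) - 1 - (i : ℕ)) * l i := by
    rw [Finset.sum_filter, ← Finset.univ_product_univ, Finset.sum_product]
    refine Finset.sum_congr rfl fun i _ => ?_
    simp only
    rw [← Finset.sum_filter, Finset.sum_const, card_filter_gt i, nsmul_eq_mul]
    have hin : (i : ℕ) + 1 ≤ n := i.isLt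
    push_cast [Nat.cast_sub hin]
    ring
  rw [h1, h2, ← Finset.sum_sub_distrib]
  refine Finset.sum_congr rfl fun i _ => ?_
  ring

end Basic

section Part1

variable {q : ℝ}

lemma summand_eq (hq0 : q ≠ 0) {n : ℕ} (α : ℤ) (l : Fin n → ℤ) :
    q ^ (α * ∑ i, l i) * weight q l
      = typeProd q l / mu q n * q ^ (∑ i : Fin n, (α + (2 * (i : ℤ) + 1 - n)) * l i) := by
  have hsplit : ∑ i : Fin n, (α + (2 * (i : ℤ) + 1 - n)) * l i
      = α * ∑ i, l i + ∑ i : Fin n, (2 * (i : ℤ) + 1 - n) * l i := by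
    rw [Finset.mul_sum, ← Finset.sum_add_distrib]
    exact Finset.sum_congr rfl fun i _ => by ring
  rw [hsplit, zpow_add₀ hq0, weight, ← pair_sum, zpow_finset_sum hq0]
  ring

def addIdx {n k : ℕ} (j : Fin (n - k)) : Fin n := ⟨k + (j : ℕ), by have := j.isLt; omega⟩

def subIdx {n k : ℕ} (i : Fin n) (h : ¬ (i : ℕ) < k) : Fin (n - k) :=
  ⟨(i : ℕ) - k, by have := i.isLt; omega⟩

def phi (n k : ℕ) (l' : Fin (n - k) → ℤ) : Fin n → ℤ :=
  fun i => if h : (i : ℕ) < k then 0 else l' (subIdx i h) + 1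

def psi (n k : ℕ) (l : Fin n → ℤ) : Fin (n - k) → ℤ :=
  fun j => l (addIdx j) - 1

lemma mem_tuples {n x : ℕ} {l : Fin n → ℤ} :
    l ∈ tuples n x ↔ (∀ i, 0 ≤ l i ∧ l i ≤ (x : ℤ)) ∧ Monotone l := by
  simp [tuples, Fintype.mem_piFinset, Finset.mem_Icc]

lemma zeros_iff {n k : ℕ} {l : Fin n → ℤ} (hmono : Monotone l) (h0 : ∀ i, 0 ≤ l i)
    (hZ : ((Finset.univ : Finset (Fin n)).filter fun i => l i = 0).card = k) (i : Fin n) :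
    l i = 0 ↔ (i : ℕ) < k := by
  constructor
  · intro hi
    have hsub : (Finset.univ.filter fun j : Fin n => (j : ℕ) < (i : ℕ) + 1)
        ⊆ Finset.univ.filter fun j : Fin n => l j = 0 := by
      intro j hj
      simp only [Finset.mem_filter, Finset.mem_univ, true_and] at hj ⊢
      have hji : j ≤ i := Fin.le_def.mpr (by omega)
      have h1 := hmono hji
      have h2 := h0 j
      omega
    have hc := Finset.card_le_card hsub
    rw [hZ, card_filter_lt _ i.isLt] at hc
    omega
  · intro hik
    by_contra hne
    have hsub : (Finset.univ.filter fun j : Fin n => l j = 0)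
        ⊆ Finset.univ.filter fun j : Fin n => (j : ℕ) < (i : ℕ) := by
      intro j hj
      simp only [Finset.mem_filter, Finset.mem_univ, true_and] at hj ⊢
      by_contra hji
      have h1 : l i ≤ l j := hmono (Fin.le_def.mpr (by omega))
      have h2 := h0 i
      omega
    have hc := Finset.card_le_card hsub
    rw [hZ, card_filter_lt _ (le_of_lt i.isLt)] at hc
    omega

lemma center_sum' (m : ℕ) : ∑ j ∈ Finset.range m, (2 * (j : ℤ) + 1) = (m : ℤ) * m := by
  induction m with
  | zero => simp
  | succ m ih => rw [Finset.sum_range_succ, ih]; push_cast; ring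

lemma center_sum (m : ℕ) : ∑ j : Fin m, (2 * (j : ℤ) + 1 - (m : ℤ)) = 0 := by
  rw [Fin.sum_univ_eq_sum_range (fun j => 2 * (j : ℤ) + 1 - (m : ℤ)) m]
  rw [Finset.sum_sub_distrib, center_sum' m, Finset.sum_const, Finset.card_range]
  push_cast
  ring

end Part1

section Part1b

variable {q : ℝ}

lemma addIdx_injective {n k : ℕ} : Function.Injective (addIdx (n := n) (k := k)) := by
  intro a b hab
  have := congrArg Fin.val hab
  simp only [addIdx] at this
  exact Fin.ext (by omega)

lemma typeProd_reindex_shift {n m : ℕ} (e : Fin n ≃ Fin m) (l : Fin m → ℤ) (c : ℤ) :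
    typeProd q (fun i => l (e i) + c) = typeProd q l := by
  unfold typeProd
  have himg : Finset.image (fun i => l (e i) + c) Finset.univ
      = (Finset.image l Finset.univ).image (· + c) := by
    ext v
    simp only [Finset.mem_image, Finset.mem_univ, true_and]
    constructor
    · rintro ⟨i, rfl⟩
      exact ⟨l (e i), ⟨e i, rfl⟩, rfl⟩
    · rintro ⟨w, ⟨j, rfl⟩, rfl⟩
      exact ⟨e.symm j, by simp⟩
  rw [himg, Finset.prod_image (fun a _ b _ h => by omega)]
  refine Finset.prod_congr rfl fun v hv => ?_
  congr 1
  have hfil : (Finset.univ.filter fun i : Fin n => l (e i) + c = v + c)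
      = Finset.univ.filter fun i : Fin n => l (e i) = v := by
    apply Finset.filter_congr
    intro i _
    constructor
    · intro h; omega
    · intro h; omega
  rw [hfil]
  exact Finset.card_bij' (fun a _ => e a) (fun b _ => e.symm b)
    (fun a ha => by simpa using by simpa using ha)
    (fun b hb => by simpa using by simpa using hb)
    (fun a _ => by simp) (fun b _ => by simp)

lemma phi_pos' {n k : ℕ} {l' : Fin (n - k) → ℤ} {i : Fin n} (h : (i : ℕ) < k) :
    phi n k l' i = 0 := dif_pos h

lemma phi_neg' {n k : ℕ} {l' : Fin (n - k) → ℤ} {i : Fin n} (h : ¬ (i : ℕ) < k) :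
    phi n k l' i = l' (subIdx i h) + 1 := dif_neg h

lemma phi_zero_iff {n k : ℕ} {l' : Fin (n - k) → ℤ} (h0 : ∀ j, 0 ≤ l' j) (i : Fin n) :
    phi n k l' i = 0 ↔ (i : ℕ) < k := by
  by_cases h : (i : ℕ) < k
  · simp [phi_pos' h, h]
  · rw [phi_neg' h]
    simp only [h, iff_false]
    have := h0 (subIdx i h)
    omega

lemma typeProd_phi {n k : ℕ} (hq : 1 < q) (hk : k ≤ n) {l' : Fin (n - k) → ℤ}
    (h0 : ∀ j, 0 ≤ l' j) :
    typeProd q (phi n k l') = mu q k * typeProd q l' := by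
  rcases Nat.eq_zero_or_pos k with hk0 | hk1
  · subst hk0
    have hphi : phi n 0 l' = fun i => l' (subIdx i (Nat.not_lt_zero _)) + 1 := by
      funext i
      exact phi_neg' (Nat.not_lt_zero _)
    have he : Function.Bijective (fun i : Fin n => subIdx (k := 0) i (Nat.not_lt_zero _)) := by
      constructor
      · intro a b hab
        have : (a : ℕ) - 0 = (b : ℕ) - 0 := congrArg Fin.val hab
        exact Fin.ext (by omega)
      · intro j
        refine ⟨⟨(j : ℕ), by have := j.isLt; omega⟩, ?_⟩
        exact Fin.ext (by simp [subIdx])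
    rw [mu_zero, one_mul, hphi]
    exact typeProd_reindex_shift (Equiv.ofBijective _ he) l' 1
  · -- k ≥ 1
    have h0T : (0 : ℤ) ∉ (Finset.image l' Finset.univ).image (· + 1) := by
      simp only [Finset.mem_image, Finset.mem_univ, true_and, not_exists]
      intro v hv
      rcases hv.1 with ⟨j, rfl⟩
      have := h0 j
      omega
    have himg : Finset.image (phi n k l') Finset.univ
        = insert 0 ((Finset.image l' Finset.univ).image (· + 1)) := by
      ext v
      constructor
      · intro hv
        obtain ⟨i, _, rfl⟩ := Finset.mem_image.mp hv
        by_cases h : (i : ℕ) < k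
        · rw [phi_pos' h]
          exact Finset.mem_insert_self _ _
        · refine Finset.mem_insert_of_mem (Finset.mem_image.mpr
            ⟨l' (subIdx i h), Finset.mem_image.mpr ⟨subIdx i h, Finset.mem_univ _, rfl⟩, ?_⟩)
          exact (phi_neg' h).symm
      · intro hv
        rcases Finset.mem_insert.mp hv with rfl | hv'
        · refine Finset.mem_image.mpr ⟨⟨0, by omega⟩, Finset.mem_univ _, ?_⟩
          exact phi_pos' hk1
        · obtain ⟨w, hw, rfl⟩ := Finset.mem_image.mp hv'
          obtain ⟨j, _, rfl⟩ := Finset.mem_image.mp hw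
          refine Finset.mem_image.mpr ⟨addIdx j, Finset.mem_univ _, ?_⟩
          have hnot : ¬ ((addIdx (k := k) j : Fin n) : ℕ) < k := by simp [addIdx]
          rw [phi_neg' hnot]
          congr 2
          exact Fin.ext (by simp [subIdx, addIdx])
    unfold typeProd
    rw [himg, Finset.prod_insert h0T]
    congr 1
    · congr 1
      have hfil : (Finset.univ.filter fun i : Fin n => phi n k l' i = 0)
          = Finset.univ.filter fun i : Fin n => (i : ℕ) < k :=
        Finset.filter_congr fun i _ => phi_zero_iff h0 i
      rw [hfil, card_filter_lt _ hk]
    · rw [Finset.prod_image (fun a _ b _ h => by omega)]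
      refine Finset.prod_congr rfl fun v hv => ?_
      congr 1
      simp only [Finset.mem_image, Finset.mem_univ, true_and] at hv
      obtain ⟨j0, hj0⟩ := hv
      have hv0 : 0 ≤ v := hj0 ▸ h0 j0
      have hfib : (Finset.univ.filter fun i : Fin n => phi n k l' i = v + 1)
          = (Finset.univ.filter fun j : Fin (n - k) => l' j = v).image addIdx := by
        ext i
        simp only [Finset.mem_filter, Finset.mem_univ, true_and, Finset.mem_image]
        constructor
        · intro hi
          have hnot : ¬ (i : ℕ) < k := fun hlt => by
            rw [phi_pos' hlt] at hi
            omega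
          refine ⟨subIdx i hnot, ?_, Fin.ext (by simp [addIdx, subIdx]; omega)⟩
          rw [phi_neg' hnot] at hi
          omega
        · rintro ⟨j, hj, rfl⟩
          have hnot : ¬ ((addIdx (k := k) j : Fin n) : ℕ) < k := by simp [addIdx]
          rw [phi_neg' hnot]
          have hsj : subIdx (addIdx j) hnot = j := Fin.ext (by simp [subIdx, addIdx])
          rw [hsj, hj]
      rw [hfib, Finset.card_image_of_injective _ addIdx_injective]

end Part1b

section Part1c

variable {q : ℝ}

lemma Eexp_phi {n k : ℕ} (hk : k ≤ n) (α : ℤ) (l' : Fin (n - k) → ℤ) :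
    (∑ i : Fin n, (α + (2 * (i : ℤ) + 1 - n)) * phi n k l' i)
      = (∑ j : Fin (n - k), ((α + k) + (2 * (j : ℤ) + 1 - ((n : ℤ) - k))) * l' j)
        + (α + k) * ((n : ℤ) - k) := by
  rw [← Finset.sum_filter_add_sum_filter_not Finset.univ (fun i : Fin n => (i : ℕ) < k)]
  have hz : ∑ i ∈ Finset.univ.filter (fun i : Fin n => (i : ℕ) < k),
      (α + (2 * (i : ℤ) + 1 - n)) * phi n k l' i = 0 :=
    Finset.sum_eq_zero fun i hi => by
      simp only [Finset.mem_filter] at hi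
      rw [phi_pos' hi.2, mul_zero]
  rw [hz, zero_add]
  have hre : ∑ i ∈ Finset.univ.filter (fun i : Fin n => ¬ (i : ℕ) < k),
      (α + (2 * (i : ℤ) + 1 - n)) * phi n k l' i
      = ∑ j : Fin (n - k), (α + (2 * ((k : ℤ) + (j : ℕ)) + 1 - n)) * (l' j + 1) := by
    refine Finset.sum_bij' (i := fun i hi => subIdx i (by
        simpa using (Finset.mem_filter.mp hi).2))
      (j := fun j _ => addIdx j) (fun a ha => Finset.mem_univ _) ?_ ?_ ?_ ?_
    · intro b _
      simp only [Finset.mem_filter, Finset.mem_univ, true_and]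
      simp [addIdx]
    · intro a ha
      simp only [Finset.mem_filter, Finset.mem_univ, true_and] at ha
      exact Fin.ext (by simp [addIdx, subIdx]; omega)
    · intro b _
      exact Fin.ext (by simp [subIdx, addIdx])
    · intro a ha
      simp only [Finset.mem_filter, Finset.mem_univ, true_and] at ha
      rw [phi_neg' ha]
      congr 1
      have hval : ((subIdx a ha : Fin (n - k)) : ℕ) = (a : ℕ) - k := rfl
      have hcast : (((a : ℕ) - k : ℕ) : ℤ) = (a : ℕ) - (k : ℤ) := by
        push_cast [Nat.cast_sub (by omega : k ≤ (a : ℕ))]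
        ring
      rw [hval, hcast]
      push_cast
      ring
  rw [hre]
  have hterm : ∀ j : Fin (n - k), (α + (2 * ((k : ℤ) + (j : ℕ)) + 1 - n)) * (l' j + 1)
      = ((α + k) + (2 * (j : ℤ) + 1 - ((n : ℤ) - k))) * l' j
        + ((α + k) + (2 * (j : ℤ) + 1 - ((n : ℤ) - k))) := fun j => by ring
  rw [Finset.sum_congr rfl fun j _ => hterm j, Finset.sum_add_distrib]
  have hconst : ∑ j : Fin (n - k), ((α + k) + (2 * (j : ℤ) + 1 - ((n : ℤ) - k)))
      = (α + k) * ((n : ℤ) - k) := by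
    rw [Finset.sum_add_distrib, Finset.sum_const, Finset.card_univ, Fintype.card_fin]
    have hc := center_sum (n - k)
    have hcast : ((n - k : ℕ) : ℤ) = (n : ℤ) - k := by
      push_cast [Nat.cast_sub hk]
      ring
    rw [← hcast]
    have hc2 : ∑ j : Fin (n - k), (2 * (j : ℤ) + 1 - ((n - k : ℕ) : ℤ)) = 0 := hc
    rw [hc2, add_zero, nsmul_eq_mul]
    ring
  rw [hconst]

lemma phi_mem {n k x : ℕ} (hk : k ≤ n) {l' : Fin (n - k) → ℤ} (hl' : l' ∈ tuples (n - k) x) :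
    phi n k l' ∈ tuples n (x + 1) := by
  obtain ⟨hb, hm⟩ := mem_tuples.mp hl'
  refine mem_tuples.mpr ⟨fun i => ?_, fun a b hab => ?_⟩
  · by_cases h : (i : ℕ) < k
    · rw [phi_pos' h]
      constructor <;> [rfl; positivity]
    · rw [phi_neg' h]
      have := hb (subIdx i h)
      push_cast
      omega
  · have hab' : (a : ℕ) ≤ (b : ℕ) := hab
    by_cases ha : (a : ℕ) < k <;> by_cases hbk : (b : ℕ) < k
    · rw [phi_pos' ha, phi_pos' hbk]
    · rw [phi_pos' ha, phi_neg' hbk]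
      have := (hb (subIdx b hbk)).1
      omega
    · omega
    · rw [phi_neg' ha, phi_neg' hbk]
      have hle : subIdx a ha ≤ subIdx b hbk := by
        simp only [subIdx, Fin.mk_le_mk]
        omega
      exact (by have := hm hle; omega)

lemma phi_zeros {n k : ℕ} (hk : k ≤ n) {l' : Fin (n - k) → ℤ} (h0 : ∀ j, 0 ≤ l' j) :
    ((Finset.univ : Finset (Fin n)).filter fun i => phi n k l' i = 0).card = k := by
  have hfil : ((Finset.univ : Finset (Fin n)).filter fun i => phi n k l' i = 0)
      = Finset.univ.filter fun i : Fin n => (i : ℕ) < k :=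
    Finset.filter_congr fun i _ => phi_zero_iff h0 i
  rw [hfil, card_filter_lt _ hk]

lemma psi_mem {n k x : ℕ} (hk : k ≤ n) {l : Fin n → ℤ} (hl : l ∈ tuples n (x + 1))
    (hZ : ((Finset.univ : Finset (Fin n)).filter fun i => l i = 0).card = k) :
    psi n k l ∈ tuples (n - k) x := by
  obtain ⟨hb, hm⟩ := mem_tuples.mp hl
  have hziff := zeros_iff hm (fun i => (hb i).1) hZ
  refine mem_tuples.mpr ⟨fun j => ?_, fun a b hab => ?_⟩
  · have h1 := hb (addIdx (k := k) j)
    have h2 : ¬ ((addIdx (k := k) j : Fin n) : ℕ) < k := by simp [addIdx]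
    have h3 : l (addIdx j) ≠ 0 := fun hh => h2 ((hziff _).mp hh)
    unfold psi
    push_cast at h1 ⊢
    omega
  · unfold psi
    have hle : addIdx (k := k) (n := n) a ≤ addIdx b := by
      simp only [addIdx, Fin.mk_le_mk]
      exact Nat.add_le_add_left hab k
    have := hm hle
    omega

lemma phi_psi {n k x : ℕ} (hk : k ≤ n) {l : Fin n → ℤ} (hl : l ∈ tuples n (x + 1))
    (hZ : ((Finset.univ : Finset (Fin n)).filter fun i => l i = 0).card = k) :
    phi n k (psi n k l) = l := by
  obtain ⟨hb, hm⟩ := mem_tuples.mp hl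
  have hziff := zeros_iff hm (fun i => (hb i).1) hZ
  funext i
  by_cases h : (i : ℕ) < k
  · rw [phi_pos' h]
    exact ((hziff i).mpr h).symm
  · rw [phi_neg' h]
    unfold psi
    have : addIdx (subIdx i h) = i := Fin.ext (by simp [addIdx, subIdx]; omega)
    rw [this]
    ring

lemma psi_phi {n k : ℕ} (l' : Fin (n - k) → ℤ) : psi n k (phi n k l') = l' := by
  funext j
  unfold psi
  have hnot : ¬ ((addIdx (k := k) j : Fin n) : ℕ) < k := by simp [addIdx]
  rw [phi_neg' hnot]
  have : subIdx (addIdx j) hnot = j := Fin.ext (by simp [subIdx, addIdx])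
  rw [this]
  ring

lemma sum_phi {n k : ℕ} (l' : Fin (n - k) → ℤ) : True := trivial

end Part1c

section Part1d

variable {q : ℝ}

lemma phi_summand (hq : 1 < q) {n k x : ℕ} (hk : k ≤ n) (α : ℤ) {l' : Fin (n - k) → ℤ}
    (hl' : l' ∈ tuples (n - k) x) :
    q ^ (α * ∑ i, phi n k l' i) * weight q (phi n k l')
      = mu q k * mu q (n - k) / mu q n * q ^ ((α + k) * ((n : ℤ) - k))
        * (q ^ ((α + k) * ∑ j, l' j) * weight q l') := by
  have hq0 : q ≠ 0 := ne_of_gt (lt_trans one_pos hq)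
  have h0 : ∀ j, 0 ≤ l' j := fun j => ((mem_tuples.mp hl').1 j).1
  have hcast : ((n - k : ℕ) : ℤ) = (n : ℤ) - k := by
    push_cast [Nat.cast_sub hk]
    ring
  rw [summand_eq hq0 α (phi n k l'), summand_eq hq0 (α + k) l', typeProd_phi hq hk h0]
  simp only [hcast]
  rw [Eexp_phi hk α l', zpow_add₀ hq0]
  have h1 := mu_ne_zero hq n
  have h2 := mu_ne_zero hq (n - k)
  field_simp

lemma sum_fiber_eq (hq : 1 < q) {n k x : ℕ} (hk : k ≤ n) (α : ℤ) :
    ∑ l ∈ (tuples n (x + 1)).filter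
        (fun l => ((Finset.univ : Finset (Fin n)).filter fun i => l i = 0).card = k),
      q ^ (α * ∑ i, l i) * weight q l
      = mu q k * mu q (n - k) / mu q n * q ^ ((α + k) * ((n : ℤ) - k))
          * vol q (n - k) (α + k) x := by
  rw [vol, Finset.mul_sum]
  refine Finset.sum_nbij' (i := psi n k) (j := phi n k) ?_ ?_ ?_ ?_ ?_
  · intro l hl
    rw [Finset.mem_filter] at hl
    exact psi_mem hk hl.1 hl.2
  · intro l' hl'
    rw [Finset.mem_filter]
    exact ⟨phi_mem hk hl', phi_zeros hk (fun j => ((mem_tuples.mp hl').1 j).1)⟩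
  · intro l hl
    rw [Finset.mem_filter] at hl
    exact phi_psi hk hl.1 hl.2
  · intro l' _
    exact psi_phi l'
  · intro l hl
    rw [Finset.mem_filter] at hl
    conv_lhs => rw [← phi_psi hk hl.1 hl.2]
    exact phi_summand hq hk α (psi_mem hk hl.1 hl.2)

lemma vol_rec (hq : 1 < q) (n : ℕ) (α : ℤ) (x : ℕ) :
    vol q n α (x + 1) = ∑ k ∈ Finset.range (n + 1),
      mu q k * mu q (n - k) / mu q n * q ^ ((α + k) * ((n : ℤ) - k))
        * vol q (n - k) (α + k) x := by
  nth_rewrite 1 [vol]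
  rw [← Finset.sum_fiberwise_of_maps_to (g := fun l : Fin n → ℤ =>
      ((Finset.univ : Finset (Fin n)).filter fun i => l i = 0).card)
      (fun l _ => Finset.mem_range.mpr (Nat.lt_succ_of_le (by
        simpa using Finset.card_filter_le (Finset.univ : Finset (Fin n))
          (fun i => l i = 0))))]
  exact Finset.sum_congr rfl fun k hk =>
    sum_fiber_eq hq (Nat.lt_succ_iff.mp (Finset.mem_range.mp hk)) α

lemma typeProd_const {n : ℕ} (hn : 0 < n) (c : ℤ) : typeProd q (fun _ : Fin n => c) = mu q n := by
  unfold typeProd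
  have hne : (Finset.univ : Finset (Fin n)).Nonempty := ⟨⟨0, hn⟩, Finset.mem_univ _⟩
  rw [Finset.image_const hne c, Finset.prod_singleton]
  congr 1
  rw [Finset.filter_true_of_mem (fun _ _ => rfl), Finset.card_univ, Fintype.card_fin]

lemma weight_const (hq : 1 < q) {n : ℕ} (c : ℤ) : weight q (fun _ : Fin n => c) = 1 := by
  unfold weight
  rw [Finset.prod_eq_one (fun p _ => by simp), mul_one]
  rcases Nat.eq_zero_or_pos n with h | h
  · subst h
    rw [mu_zero]
    unfold typeProd
    simp
  · rw [typeProd_const h c, div_self (mu_ne_zero hq n)]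

lemma vol_zero (hq : 1 < q) (n : ℕ) (α : ℤ) : vol q n α 0 = 1 := by
  have htup : tuples n 0 = {fun _ => (0 : ℤ)} := by
    ext l
    rw [Finset.mem_singleton, mem_tuples]
    constructor
    · intro ⟨hb, _⟩
      funext i
      have := hb i
      omega
    · rintro rfl
      exact ⟨fun i => by simp, monotone_const⟩
  rw [vol, htup, Finset.sum_singleton, weight_const hq, mul_one]
  simp

lemma vol_nil (hq : 1 < q) (α : ℤ) (x : ℕ) : vol q 0 α x = 1 := by
  have htup : tuples 0 x = {fun _ => (0 : ℤ)} := by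
    ext l
    rw [Finset.mem_singleton, mem_tuples]
    constructor
    · intro _
      funext i
      exact i.elim0
    · rintro rfl
      exact ⟨fun i => i.elim0, monotone_const⟩
  rw [vol, htup, Finset.sum_singleton, weight_const hq, mul_one]
  simp

end Part1d

section Key

variable {q : ℝ}

noncomputable def Dd (q : ℝ) (m : ℕ) : ℝ := ∏ i ∈ Finset.range m, (q ^ (i + 1) - 1)

lemma pow_sub_one_pos (hq : 1 < q) (m : ℕ) : (0 : ℝ) < q ^ (m + 1) - 1 := by
  have := one_lt_pow₀ hq (by omega : m + 1 ≠ 0)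
  linarith

lemma Dd_pos (hq : 1 < q) (m : ℕ) : 0 < Dd q m :=
  Finset.prod_pos fun i _ => pow_sub_one_pos hq i

lemma Dd_ne_zero (hq : 1 < q) (m : ℕ) : Dd q m ≠ 0 := ne_of_gt (Dd_pos hq m)

lemma Dd_zero : Dd q 0 = 1 := by simp [Dd]

lemma Dd_succ (m : ℕ) : Dd q (m + 1) = Dd q m * (q ^ (m + 1) - 1) :=
  Finset.prod_range_succ _ _

lemma mu_eq_Dd (hq : 1 < q) (m : ℕ) :
    mu q m = (q - 1) ^ m * q ^ (∑ i ∈ Finset.range m, i) / Dd q m := by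
  have hq0 : q ≠ 0 := ne_of_gt (lt_trans one_pos hq)
  unfold mu Dd
  have hfact : ∀ i : ℕ, (1 - q⁻¹) / (1 - q ^ (-((i : ℤ) + 1)))
      = (q - 1) * q ^ i / (q ^ (i + 1) - 1) := by
    intro i
    have hz : q ^ (-((i : ℤ) + 1)) = (q ^ (i + 1) : ℝ)⁻¹ := by
      rw [show -((i : ℤ) + 1) = -(((i + 1 : ℕ) : ℤ)) by push_cast; ring, zpow_neg, zpow_natCast]
    rw [hz]
    have hp : (q : ℝ) ^ (i + 1) ≠ 0 := pow_ne_zero _ hq0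
    have hd : q ^ (i + 1) - 1 ≠ 0 := ne_of_gt (pow_sub_one_pos hq i)
    have hd' : (1 : ℝ) - (q ^ (i + 1))⁻¹ ≠ 0 := by
      have h1 : (1 : ℝ) < q ^ (i + 1) := one_lt_pow₀ hq (by omega)
      have : (q ^ (i + 1) : ℝ)⁻¹ < 1 := inv_lt_one_of_one_lt₀ h1
      intro h
      nlinarith
    field_simp
    ring
  rw [Finset.prod_congr rfl fun i _ => hfact i]
  rw [Finset.prod_div_distrib, Finset.prod_mul_distrib, Finset.prod_const, Finset.card_range,
    Finset.prod_pow_eq_pow_sum]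

noncomputable def Dq (q : ℝ) (n k : ℕ) : ℝ := Dd q n / (Dd q k * Dd q (n - k))

lemma sum_range_id_add (k m : ℕ) :
    (∑ i ∈ Finset.range (k + m), i) = (∑ i ∈ Finset.range k, i) + (∑ i ∈ Finset.range m, i) + k * m := by
  induction m with
  | zero => simp
  | succ m ih =>
    rw [show k + (m + 1) = (k + m) + 1 by ring, Finset.sum_range_succ, ih,
      Finset.sum_range_succ]
    ring

lemma Dq_mu (hq : 1 < q) {n k : ℕ} (hk : k ≤ n) :
    mu q k * mu q (n - k) / mu q n * q ^ (k * (n - k)) = Dq q n k := by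
  have hq0 : q ≠ 0 := ne_of_gt (lt_trans one_pos hq)
  obtain ⟨m, rfl⟩ : ∃ m, n = k + m := ⟨n - k, by omega⟩
  have hsub : k + m - k = m := by omega
  have hA : (q - 1) ≠ 0 := by intro h; rw [sub_eq_zero] at h; rw [← h] at hq; exact lt_irrefl _ hq
  rw [mu_eq_Dd hq, mu_eq_Dd hq, mu_eq_Dd hq, Dq, hsub]
  have h1 := Dd_ne_zero hq (k + m)
  have h2 := Dd_ne_zero hq k
  have h3 := Dd_ne_zero hq m
  have hApow : ∀ s : ℕ, (q - 1 : ℝ) ^ s ≠ 0 := fun s => pow_ne_zero _ hA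
  have hQpow : ∀ s : ℕ, (q : ℝ) ^ s ≠ 0 := fun s => pow_ne_zero _ hq0
  have hexp : (q : ℝ) ^ (∑ i ∈ Finset.range k, i) * q ^ (∑ i ∈ Finset.range m, i)
      * q ^ (k * m) = q ^ (∑ i ∈ Finset.range (k + m), i) := by
    rw [← pow_add, ← pow_add, sum_range_id_add]
  have hApow2 : (q - 1 : ℝ) ^ k * (q - 1) ^ m = (q - 1) ^ (k + m) := by rw [← pow_add]
  field_simp
  rw [← hexp, ← hApow2]
  ring

lemma Dq_zero_right (hq : 1 < q) (n : ℕ) : Dq q n 0 = 1 := by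
  rw [Dq, Nat.sub_zero, Dd_zero, one_mul, div_self (Dd_ne_zero hq n)]

lemma Dq_self (hq : 1 < q) (n : ℕ) : Dq q n n = 1 := by
  rw [Dq, Nat.sub_self, Dd_zero, mul_one, div_self (Dd_ne_zero hq n)]

lemma Dq_pascal (hq : 1 < q) (j m : ℕ) :
    Dq q (j + m + 2) (j + 1) = q ^ (j + 1) * Dq q (j + m + 1) (j + 1) + Dq q (j + m + 1) j := by
  have hq0 : q ≠ 0 := ne_of_gt (lt_trans one_pos hq)
  have e1 : j + m + 2 - (j + 1) = m + 1 := by omega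
  have e2 : j + m + 1 - (j + 1) = m := by omega
  have e3 : j + m + 1 - j = m + 1 := by omega
  unfold Dq
  rw [e1, e2, e3]
  rw [show Dd q (j + m + 2) = Dd q (j + m + 1) * (q ^ (j + m + 2) - 1) from Dd_succ _,
    show Dd q (m + 1) = Dd q m * (q ^ (m + 1) - 1) from Dd_succ _,
    show Dd q (j + 1) = Dd q j * (q ^ (j + 1) - 1) from Dd_succ _]
  have hDj := Dd_ne_zero hq j
  have hDm := Dd_ne_zero hq m
  have hDjm := Dd_ne_zero hq (j + m + 1)
  have hfj : (q : ℝ) ^ (j + 1) - 1 ≠ 0 := ne_of_gt (pow_sub_one_pos hq j)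
  have hfm : (q : ℝ) ^ (m + 1) - 1 ≠ 0 := ne_of_gt (pow_sub_one_pos hq m)
  field_simp
  ring

end Key

section KeyIdentity

variable {q : ℝ}

noncomputable def Pprod (q t : ℝ) (k : ℕ) : ℝ := ∏ i ∈ Finset.range k, (1 - t * q ^ i)

lemma Pprod_zero (t : ℝ) : Pprod q t 0 = 1 := by simp [Pprod]

lemma Pprod_succ (t : ℝ) (k : ℕ) : Pprod q t (k + 1) = Pprod q t k * (1 - t * q ^ k) :=
  Finset.prod_range_succ _ _

lemma key_identity (hq : 1 < q) (t : ℝ) (n : ℕ) :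
    ∑ k ∈ Finset.range (n + 1), Dq q n k * t ^ (n - k) * Pprod q t k = 1 := by
  induction n with
  | zero => simp [Dq_self hq, Pprod_zero]
  | succ n ih =>
    have hP : ∀ k ∈ Finset.range n,
        Dq q (n + 1) (k + 1) * t ^ (n + 1 - (k + 1)) * Pprod q t (k + 1)
        = q ^ (k + 1) * Dq q n (k + 1) * t ^ (n + 1 - (k + 1)) * Pprod q t (k + 1)
          + Dq q n k * t ^ (n - k) * Pprod q t (k + 1) := by
      intro k hk
      have hkn : k < n := Finset.mem_range.mp hk
      have hpas := Dq_pascal hq k (n - k - 1)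
      rw [show k + (n - k - 1) + 2 = n + 1 by omega, show k + (n - k - 1) + 1 = n by omega]
        at hpas
      rw [hpas, show n + 1 - (k + 1) = n - k by omega]
      ring
    rw [Finset.sum_range_succ'
      (fun k => Dq q (n + 1) k * t ^ (n + 1 - k) * Pprod q t k) (n + 1)]
    rw [Finset.sum_range_succ
      (fun k => Dq q (n + 1) (k + 1) * t ^ (n + 1 - (k + 1)) * Pprod q t (k + 1)) n]
    rw [Finset.sum_congr rfl hP, Finset.sum_add_distrib]
    -- Boundary values
    rw [Dq_self hq (n + 1), Dq_zero_right hq (n + 1)]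
    -- reassemble first bracket as a (n+1)-range sum
    have hS1 : ∑ k ∈ Finset.range (n + 1), q ^ k * Dq q n k * t ^ (n + 1 - k) * Pprod q t k
        = (∑ k ∈ Finset.range n,
            q ^ (k + 1) * Dq q n (k + 1) * t ^ (n + 1 - (k + 1)) * Pprod q t (k + 1))
          + q ^ 0 * Dq q n 0 * t ^ (n + 1 - 0) * Pprod q t 0 :=
      Finset.sum_range_succ' _ n
    have hS2 : ∑ k ∈ Finset.range (n + 1), Dq q n k * t ^ (n - k) * Pprod q t (k + 1)
        = (∑ k ∈ Finset.range n, Dq q n k * t ^ (n - k) * Pprod q t (k + 1))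
          + Dq q n n * t ^ (n - n) * Pprod q t (n + 1) :=
      Finset.sum_range_succ _ n
    have hmerge : ∑ k ∈ Finset.range (n + 1),
        (q ^ k * Dq q n k * t ^ (n + 1 - k) * Pprod q t k
          + Dq q n k * t ^ (n - k) * Pprod q t (k + 1))
        = ∑ k ∈ Finset.range (n + 1), Dq q n k * t ^ (n - k) * Pprod q t k := by
      refine Finset.sum_congr rfl fun k hk => ?_
      have hkn : k ≤ n := Nat.lt_succ_iff.mp (Finset.mem_range.mp hk)
      rw [Pprod_succ, show n + 1 - k = (n - k) + 1 by omega, pow_succ]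
      ring
    have hfin : (∑ k ∈ Finset.range n,
          q ^ (k + 1) * Dq q n (k + 1) * t ^ (n + 1 - (k + 1)) * Pprod q t (k + 1))
        + (∑ k ∈ Finset.range n, Dq q n k * t ^ (n - k) * Pprod q t (k + 1))
        + 1 * t ^ (n + 1 - (n + 1)) * Pprod q t (n + 1) + 1 * t ^ (n + 1 - 0) * Pprod q t 0
        = (∑ k ∈ Finset.range (n + 1), q ^ k * Dq q n k * t ^ (n + 1 - k) * Pprod q t k)
          + ∑ k ∈ Finset.range (n + 1), Dq q n k * t ^ (n - k) * Pprod q t (k + 1) := by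
      rw [hS1, hS2, Dq_self hq n, Dq_zero_right hq n, pow_zero,
        show n + 1 - (n + 1) = n - n by omega]
      ring
    rw [hfin, ← Finset.sum_add_distrib, hmerge, ih]

section QPdef

variable {q : ℝ}

/-- `f` agrees for `x ≥ 1` with a `q`-quasi-polynomial whose coefficients are supported
on `{a ≥ 1} ∪ {(0,0)}` and whose constant coefficient is `r`. -/
def QP (q : ℝ) (f : ℕ → ℝ) (r : ℝ) : Prop :=
  ∃ c : (ℕ × ℕ) →₀ ℝ, (∀ a b : ℕ, c (a, b) ≠ 0 → 1 ≤ a ∨ (a, b) = (0, 0)) ∧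
    c (0, 0) = r ∧ ∀ x : ℕ, 1 ≤ x → f x = qQuasiEval q c x

lemma qQuasiEval_add (c d : (ℕ × ℕ) →₀ ℝ) (x : ℕ) :
    qQuasiEval q (c + d) x = qQuasiEval q c x + qQuasiEval q d x := by
  unfold qQuasiEval
  exact Finsupp.sum_add_index' (fun p => by simp) (fun p r s => by ring)

lemma qQuasiEval_smul (t : ℝ) (c : (ℕ × ℕ) →₀ ℝ) (x : ℕ) :
    qQuasiEval q (t • c) x = t * qQuasiEval q c x := by
  unfold qQuasiEval
  rw [Finsupp.sum_smul_index (fun p => by simp), Finsupp.mul_sum]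
  exact Finsupp.sum_congr fun p _ => by ring

lemma qQuasiEval_single (p : ℕ × ℕ) (r : ℝ) (x : ℕ) :
    qQuasiEval q (Finsupp.single p r) x = r * q ^ (p.1 * x) * (x : ℝ) ^ p.2 :=
  Finsupp.sum_single_index (by simp)

lemma QP.congr {f g : ℕ → ℝ} {r : ℝ} (h : ∀ x : ℕ, 1 ≤ x → f x = g x) (hf : QP q f r) :
    QP q g r := by
  obtain ⟨c, h1, h2, h3⟩ := hf
  exact ⟨c, h1, h2, fun x hx => (h x hx) ▸ h3 x hx⟩

lemma QP.const (r : ℝ) : QP q (fun _ => r) r := by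
  refine ⟨Finsupp.single (0, 0) r, ?_, Finsupp.single_eq_same, fun x hx => ?_⟩
  · intro a b hab
    by_cases h : ((a, b) : ℕ × ℕ) = (0, 0)
    · exact Or.inr h
    · rw [Finsupp.single_eq_of_ne' (Ne.symm h)] at hab
      exact absurd rfl hab
  · rw [qQuasiEval_single]
    simp

lemma QP.zero : QP q (fun _ => 0) 0 := by
  refine ⟨0, by simp, by simp, fun x hx => by simp [qQuasiEval]⟩

lemma QP.add {f g : ℕ → ℝ} {r s : ℝ} (hf : QP q f r) (hg : QP q g s) :
    QP q (fun x => f x + g x) (r + s) := by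
  obtain ⟨c, hc1, hc2, hc3⟩ := hf
  obtain ⟨d, hd1, hd2, hd3⟩ := hg
  refine ⟨c + d, ?_, by rw [Finsupp.add_apply, hc2, hd2], fun x hx => ?_⟩
  · intro a b hab
    rw [Finsupp.add_apply] at hab
    rcases ne_or_eq (c (a, b)) 0 with h | h
    · exact hc1 a b h
    · exact hd1 a b (by rw [h, zero_add] at hab; exact hab)
  · rw [qQuasiEval_add, ← hc3 x hx, ← hd3 x hx]

lemma QP.smul {f : ℕ → ℝ} {r : ℝ} (t : ℝ) (hf : QP q f r) :
    QP q (fun x => t * f x) (t * r) := by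
  obtain ⟨c, hc1, hc2, hc3⟩ := hf
  refine ⟨t • c, ?_, by rw [Finsupp.smul_apply, hc2, smul_eq_mul], fun x hx => ?_⟩
  · intro a b hab
    rw [Finsupp.smul_apply, smul_eq_mul] at hab
    exact hc1 a b (fun h => hab (by rw [h, mul_zero]))
  · rw [qQuasiEval_smul, ← hc3 x hx]

lemma QP.sum {ι : Type*} (s : Finset ι) (F : ι → ℕ → ℝ) (R : ι → ℝ)
    (h : ∀ i ∈ s, QP q (F i) (R i)) :
    QP q (fun x => ∑ i ∈ s, F i x) (∑ i ∈ s, R i) := by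
  classical
  induction s using Finset.induction_on with
  | empty => simpa using QP.zero
  | @insert a s ha ih =>
    rw [Finset.sum_insert ha]
    have h2 := QP.add (h a (Finset.mem_insert_self a s))
      (ih fun i hi => h i (Finset.mem_insert_of_mem hi))
    exact QP.congr (fun x hx => (Finset.sum_insert ha).symm) h2

lemma QP.basis (hq : 1 < q) {a : ℕ} (ha : 1 ≤ a) (b : ℕ) :
    QP q (fun x => q ^ (a * x) * (x : ℝ) ^ b) 0 := by
  refine ⟨Finsupp.single (a, b) 1, ?_, ?_, fun x hx => ?_⟩
  · intro a' b' hab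
    by_cases h : ((a', b') : ℕ × ℕ) = (a, b)
    · left
      rw [Prod.mk.injEq] at h
      omega
    · rw [Finsupp.single_eq_of_ne' (fun hh => h hh.symm)] at hab
      exact absurd rfl hab
  · rw [Finsupp.single_eq_of_ne]
    intro hh
    rw [Prod.mk.injEq] at hh
    omega
  · rw [qQuasiEval_single, one_mul]

lemma QP.geom (hq : 1 < q) {m : ℕ} (hm : 1 ≤ m) (C : ℝ) :
    QP q (fun x => C * q ^ (m * (x - 1))) 0 := by
  have hq0 : q ≠ 0 := ne_of_gt (lt_trans one_pos hq)
  have h1 := QP.smul (C / q ^ m) (QP.basis hq hm 0)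
  rw [mul_zero] at h1
  refine h1.congr ?_
  intro x hx
  obtain ⟨y, rfl⟩ : ∃ y, x = y + 1 := ⟨x - 1, by omega⟩
  have he : m * (y + 1 - 1) = m * (y + 1) - m := by
    simp [Nat.mul_succ]
  rw [he, pow_sub₀ q hq0 (by nlinarith [Nat.le_mul_of_pos_right m (by omega : 0 < y + 1)] : m ≤ m * (y + 1))]
  simp
  ring

end QPdef

section Solve

variable {q : ℝ}

lemma binom_expand (b : ℕ) (x : ℝ) :
    (x + 1) ^ b = ∑ j ∈ Finset.range (b + 1), (b.choose j : ℝ) * x ^ j := by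
  rw [add_pow]
  exact Finset.sum_congr rfl fun j hj => by rw [one_pow]; ring

lemma part_sol (hq : 1 < q) {m : ℕ} (hm : 1 ≤ m) (b : ℕ) {a : ℕ} (ha : 1 ≤ a) :
    ∃ H : ℕ → ℝ, QP q H 0 ∧
      ∀ x : ℕ, H (x + 1) = q ^ m * H x + q ^ (a * x) * (x : ℝ) ^ b := by
  have hq0 : (0 : ℝ) < q := lt_trans one_pos hq
  induction b using Nat.strong_induction_on with
  | _ b IH =>
  obtain ⟨G, d, w, u, hd, hGQ, hG⟩ :
      ∃ (G : ℕ → ℝ) (d w : ℝ) (u : ℕ → ℝ), d ≠ 0 ∧ QP q G 0 ∧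
        ∀ x : ℕ, G (x + 1) = q ^ m * G x + d * (q ^ (a * x) * (x : ℝ) ^ b)
          + w * (q ^ (a * x) * ∑ j ∈ Finset.range b, u j * (x : ℝ) ^ j) := by
    by_cases ham : a = m
    · subst ham
      refine ⟨fun x => q ^ (a * x) * (x : ℝ) ^ (b + 1), q ^ a * (b + 1), q ^ a,
        fun j => ((b + 1).choose j : ℝ), by positivity, QP.basis hq ha (b + 1), ?_⟩
      intro x
      have hxp : ((x + 1 : ℕ) : ℝ) = (x : ℝ) + 1 := by push_cast; ring
      simp only
      rw [show a * (x + 1) = a * x + a from by ring, pow_add, hxp, binom_expand,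
        Finset.sum_range_succ, Finset.sum_range_succ, Nat.choose_self,
        Nat.choose_succ_self_right]
      push_cast
      ring
    · refine ⟨fun x => q ^ (a * x) * (x : ℝ) ^ b, q ^ a - q ^ m, q ^ a,
        fun j => (b.choose j : ℝ), ?_, QP.basis hq ha b, ?_⟩
      · intro h
        rw [sub_eq_zero] at h
        rcases Nat.lt_or_ge a m with hlt | hge
        · exact absurd h (ne_of_lt (pow_lt_pow_right₀ hq hlt))
        · exact absurd h (ne_of_gt (pow_lt_pow_right₀ hq (by omega : m < a)))
      · intro x
        have hxp : ((x + 1 : ℕ) : ℝ) = (x : ℝ) + 1 := by push_cast; ring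
        simp only
        rw [show a * (x + 1) = a * x + a from by ring, pow_add, hxp, binom_expand,
          Finset.sum_range_succ, Nat.choose_self]
        push_cast
        ring
  have hex : ∀ j : ℕ, ∃ Hj : ℕ → ℝ, QP q Hj 0 ∧
      (j < b → ∀ x : ℕ, Hj (x + 1) = q ^ m * Hj x + q ^ (a * x) * (x : ℝ) ^ j) := by
    intro j
    by_cases hj : j < b
    · obtain ⟨H, h1, h2⟩ := IH j hj
      exact ⟨H, h1, fun _ => h2⟩
    · exact ⟨fun _ => 0, QP.zero, fun h => absurd h hj⟩
  choose Hf hQf hRf using hex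
  refine ⟨fun x => d⁻¹ * (G x + (-w) * ∑ j ∈ Finset.range b, u j * Hf j x), ?_, ?_⟩
  · have hq1 := QP.sum (Finset.range b) (fun j => fun x => u j * Hf j x)
      (fun j => u j * 0) (fun j _ => QP.smul (u j) (hQf j))
    have hq2 := QP.smul d⁻¹ (QP.add hGQ (QP.smul (-w) hq1))
    have hc : d⁻¹ * (0 + -w * (∑ j ∈ Finset.range b, u j * 0)) = 0 := by simp
    exact hc ▸ hq2
  · intro x
    have hsum : ∑ j ∈ Finset.range b, u j * Hf j (x + 1)
        = q ^ m * (∑ j ∈ Finset.range b, u j * Hf j x)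
          + q ^ (a * x) * ∑ j ∈ Finset.range b, u j * (x : ℝ) ^ j := by
      rw [Finset.mul_sum, Finset.mul_sum, ← Finset.sum_add_distrib]
      refine Finset.sum_congr rfl fun j hj => ?_
      rw [hRf j (Finset.mem_range.mp hj) x]
      ring
    simp only
    rw [hG x, hsum]
    field_simp
    ring

lemma QP_solve (hq : 1 < q) {m : ℕ} (hm : 1 ≤ m) {g f : ℕ → ℝ} {r : ℝ} (hg : QP q g r)
    (hf : ∀ x : ℕ, 1 ≤ x → f (x + 1) = q ^ m * f x + g x) :
    QP q f (r / (1 - q ^ m)) := by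
  have hq0 : q ≠ 0 := ne_of_gt (lt_trans one_pos hq)
  have hqm : (1 : ℝ) - q ^ m ≠ 0 := by
    have := one_lt_pow₀ hq (by omega : m ≠ 0)
    intro h
    nlinarith
  obtain ⟨c, hc1, hc2, hc3⟩ := hg
  have hex : ∀ p : ℕ × ℕ, ∃ Hp : ℕ → ℝ, QP q Hp 0 ∧
      (1 ≤ p.1 → ∀ x : ℕ, Hp (x + 1) = q ^ m * Hp x + q ^ (p.1 * x) * (x : ℝ) ^ p.2) := by
    intro p
    by_cases hp : 1 ≤ p.1
    · obtain ⟨H, h1, h2⟩ := part_sol hq hm p.2 hp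
      exact ⟨H, h1, fun _ => h2⟩
    · exact ⟨fun _ => 0, QP.zero, fun h => absurd h hp⟩
  choose Hf hQf hRf using hex
  set T := c.support.erase (0, 0) with hT
  have hTmem : ∀ p ∈ T, 1 ≤ p.1 := by
    intro p hp
    have h1 : p ≠ (0, 0) := Finset.ne_of_mem_erase hp
    have h2 : c p ≠ 0 := Finsupp.mem_support_iff.mp (Finset.mem_of_mem_erase hp)
    rcases hc1 p.1 p.2 h2 with h | h
    · exact h
    · exact absurd h h1
  set H : ℕ → ℝ := fun x => r / (1 - q ^ m) + ∑ p ∈ T, c p * Hf p x with hH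
  have hHQ : QP q H (r / (1 - q ^ m) + ∑ p ∈ T, c p * 0) :=
    QP.add (QP.const _) (QP.sum _ _ _ fun p _ => QP.smul (c p) (hQf p))
  have heval : ∀ x : ℕ, qQuasiEval q c x
      = c (0, 0) + ∑ p ∈ T, c p * (q ^ (p.1 * x) * (x : ℝ) ^ p.2) := by
    intro x
    rw [qQuasiEval, Finsupp.sum]
    by_cases h00 : ((0, 0) : ℕ × ℕ) ∈ c.support
    · rw [← Finset.insert_erase h00, Finset.sum_insert (Finset.notMem_erase _ _)]
      simp only [Nat.zero_mul, pow_zero, mul_one]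
      congr 1
      exact Finset.sum_congr rfl fun p _ => by ring
    · rw [Finsupp.notMem_support_iff.mp h00, zero_add, hT,
        Finset.erase_eq_of_notMem h00]
      exact Finset.sum_congr rfl fun p _ => by ring
  have hHrec : ∀ x : ℕ, 1 ≤ x → H (x + 1) = q ^ m * H x + g x := by
    intro x hx
    rw [hc3 x hx, heval x, hc2, hH]
    simp only
    have hs : ∑ p ∈ T, c p * Hf p (x + 1)
        = q ^ m * (∑ p ∈ T, c p * Hf p x)
          + ∑ p ∈ T, c p * (q ^ (p.1 * x) * (x : ℝ) ^ p.2) := by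
      rw [Finset.mul_sum, ← Finset.sum_add_distrib]
      refine Finset.sum_congr rfl fun p hp => ?_
      rw [hRf p (hTmem p hp) x]
      ring
    rw [hs]
    field_simp
    ring
  have hdiff : ∀ x : ℕ, f (x + 1) = H (x + 1) + (f 1 - H 1) * q ^ (m * x) := by
    intro x
    induction x with
    | zero => simp
    | succ y ih =>
      rw [hf (y + 1) (by omega), hHrec (y + 1) (by omega), ih, Nat.mul_succ, pow_add]
      ring
  have hgoal := QP.add hHQ (QP.geom hq hm (f 1 - H 1))
  have hC : (r / (1 - q ^ m) + ∑ p ∈ T, c p * 0) + 0 = r / (1 - q ^ m) := by simp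
  rw [hC] at hgoal
  refine QP.congr ?_ hgoal
  intro x hx
  obtain ⟨y, rfl⟩ : ∃ y, x = y + 1 := ⟨x - 1, by omega⟩
  rw [show y + 1 - 1 = y from rfl]
  exact (hdiff y).symm

end Solve

section Main

variable {q : ℝ}

lemma one_sub_zpow_ne_zero (hq : 1 < q) {β : ℤ} (hβ : 1 ≤ β) :
    (1 : ℝ) - q ^ β ≠ 0 := by
  have h1 : (1 : ℝ) < q ^ β := one_lt_zpow₀ hq (by omega)
  intro h
  nlinarith

theorem vol_QP (hq : 1 < q) (n : ℕ) : ∀ α : ℤ, 1 ≤ α →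
    QP q (vol q n α) (∏ i ∈ Finset.range n, (1 - q ^ (α + (i : ℤ)))⁻¹) := by
  induction n using Nat.strong_induction_on with
  | _ n IH =>
  intro α hα
  rcases Nat.eq_zero_or_pos n with rfl | hn
  · simpa using QP.congr (fun x _ => (vol_nil hq α x).symm) (QP.const 1)
  have hq0 : q ≠ 0 := ne_of_gt (lt_trans one_pos hq)
  have hmnn : (0 : ℤ) ≤ α * n := mul_nonneg (by omega) (Int.natCast_nonneg n)
  have hmz : (((α * n).toNat : ℕ) : ℤ) = α * n := Int.toNat_of_nonneg hmnn
  have hm1 : 1 ≤ (α * n).toNat := by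
    have h1n : (1 : ℤ) ≤ (n : ℤ) := by exact_mod_cast hn
    have : (1 : ℤ) ≤ α * n := by nlinarith
    omega
  have hqm : q ^ ((α * n).toNat) = (q ^ α) ^ n := by
    rw [← zpow_natCast q ((α * n).toNat), hmz, zpow_mul, zpow_natCast]
  have hW : ∀ i : ℕ, (1 : ℝ) - q ^ (α + (i : ℤ)) ≠ 0 := fun i =>
    one_sub_zpow_ne_zero hq (by have := Int.natCast_nonneg i; omega)
  -- the recursion
  have hrec : ∀ x : ℕ, vol q n α (x + 1)
      = q ^ ((α * n).toNat) * vol q n α x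
        + ∑ k ∈ Finset.range n,
            mu q (k + 1) * mu q (n - (k + 1)) / mu q n
              * q ^ ((α + ((k + 1 : ℕ) : ℤ)) * ((n : ℤ) - ((k + 1 : ℕ) : ℤ)))
              * vol q (n - (k + 1)) (α + ((k + 1 : ℕ) : ℤ)) x := by
    intro x
    rw [vol_rec hq n α x, Finset.sum_range_succ', add_comm]
    congr 1
    · simp only [Nat.cast_zero, add_zero, sub_zero, Nat.sub_zero, mu_zero, one_mul]
      rw [div_self (mu_ne_zero hq n), one_mul]
      congr 1
      rw [← zpow_natCast q ((α * n).toNat), hmz]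
  -- quasi-polynomiality of the inhomogeneous part
  have hgQP : QP q
      (fun x => ∑ k ∈ Finset.range n,
        mu q (k + 1) * mu q (n - (k + 1)) / mu q n
          * q ^ ((α + ((k + 1 : ℕ) : ℤ)) * ((n : ℤ) - ((k + 1 : ℕ) : ℤ)))
          * vol q (n - (k + 1)) (α + ((k + 1 : ℕ) : ℤ)) x)
      (∑ k ∈ Finset.range n,
        mu q (k + 1) * mu q (n - (k + 1)) / mu q n
          * q ^ ((α + ((k + 1 : ℕ) : ℤ)) * ((n : ℤ) - ((k + 1 : ℕ) : ℤ)))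
          * ∏ i ∈ Finset.range (n - (k + 1)),
              (1 - q ^ ((α + ((k + 1 : ℕ) : ℤ)) + (i : ℤ)))⁻¹) := by
    refine QP.sum _ _ _ fun k hk => ?_
    have hkn : k < n := Finset.mem_range.mp hk
    exact QP.smul _ (IH (n - (k + 1)) (by omega) (α + ((k + 1 : ℕ) : ℤ))
      (by have := Int.natCast_nonneg (k + 1); omega))
  have hsolve := QP_solve hq hm1 hgQP (fun x _ => hrec x)
  -- identify the constant
  have hconst : (∑ k ∈ Finset.range n,
        mu q (k + 1) * mu q (n - (k + 1)) / mu q n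
          * q ^ ((α + ((k + 1 : ℕ) : ℤ)) * ((n : ℤ) - ((k + 1 : ℕ) : ℤ)))
          * ∏ i ∈ Finset.range (n - (k + 1)),
              (1 - q ^ ((α + ((k + 1 : ℕ) : ℤ)) + (i : ℤ)))⁻¹)
        / (1 - q ^ ((α * n).toNat))
      = ∏ i ∈ Finset.range n, (1 - q ^ (α + (i : ℤ)))⁻¹ := by
    have hqmne : (1 : ℝ) - q ^ ((α * n).toNat) ≠ 0 := by
      have := one_lt_pow₀ hq (by omega : (α * n).toNat ≠ 0)
      intro h
      nlinarith
    have hWne : (∏ i ∈ Finset.range n, (1 - q ^ (α + (i : ℤ)))) ≠ 0 :=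
      Finset.prod_ne_zero_iff.mpr fun i _ => hW i
    rw [div_eq_iff hqmne]
    apply mul_right_cancel₀ hWne
    have hPinvW : (∏ i ∈ Finset.range n, (1 - q ^ (α + (i : ℤ)))⁻¹)
        * ∏ i ∈ Finset.range n, (1 - q ^ (α + (i : ℤ))) = 1 := by
      rw [← Finset.prod_mul_distrib]
      exact Finset.prod_eq_one fun i _ => inv_mul_cancel₀ (hW i)
    -- LHS : termwise computation
    have hterm : ∀ k ∈ Finset.range n,
        mu q (k + 1) * mu q (n - (k + 1)) / mu q n
          * q ^ ((α + ((k + 1 : ℕ) : ℤ)) * ((n : ℤ) - ((k + 1 : ℕ) : ℤ)))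
          * (∏ i ∈ Finset.range (n - (k + 1)),
              (1 - q ^ ((α + ((k + 1 : ℕ) : ℤ)) + (i : ℤ)))⁻¹)
          * ∏ i ∈ Finset.range n, (1 - q ^ (α + (i : ℤ)))
        = Dq q n (k + 1) * (q ^ α) ^ (n - (k + 1)) * Pprod q (q ^ α) (k + 1) := by
      intro k hk
      have hkn : k < n := Finset.mem_range.mp hk
      -- coefficient
      have hcoeff : mu q (k + 1) * mu q (n - (k + 1)) / mu q n
          * q ^ ((α + ((k + 1 : ℕ) : ℤ)) * ((n : ℤ) - ((k + 1 : ℕ) : ℤ)))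
          = Dq q n (k + 1) * (q ^ α) ^ (n - (k + 1)) := by
        have he : (α + ((k + 1 : ℕ) : ℤ)) * ((n : ℤ) - ((k + 1 : ℕ) : ℤ))
            = α * ((n - (k + 1) : ℕ) : ℤ) + (((k + 1) * (n - (k + 1)) : ℕ) : ℤ) := by
          push_cast [Nat.cast_sub (by omega : k + 1 ≤ n)]
          ring
        rw [he, zpow_add₀ hq0, zpow_natCast, zpow_mul, zpow_natCast,
          ← Dq_mu hq (by omega : k + 1 ≤ n)]
        ring
      -- product splitting
      have hprod : (∏ i ∈ Finset.range (n - (k + 1)),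
            (1 - q ^ ((α + ((k + 1 : ℕ) : ℤ)) + (i : ℤ)))⁻¹)
          * ∏ i ∈ Finset.range n, (1 - q ^ (α + (i : ℤ)))
          = ∏ i ∈ Finset.range (k + 1), (1 - q ^ (α + (i : ℤ))) := by
        have hn2 : n = (k + 1) + (n - (k + 1)) := by omega
        have hsplit : ∏ i ∈ Finset.range n, (1 - q ^ (α + (i : ℤ)))
            = (∏ i ∈ Finset.range (k + 1), (1 - q ^ (α + (i : ℤ))))
              * ∏ i ∈ Finset.range (n - (k + 1)),
                  (1 - q ^ (α + (((k + 1) + i : ℕ) : ℤ))) := by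
          conv_lhs => rw [hn2]
          rw [Finset.prod_range_add]
        have hexp : ∀ i : ℕ, (α + ((k + 1 : ℕ) : ℤ)) + (i : ℤ)
            = α + (((k + 1) + i : ℕ) : ℤ) := fun i => by push_cast; ring
        rw [hsplit]
        have hcancel : (∏ i ∈ Finset.range (n - (k + 1)),
              (1 - q ^ ((α + ((k + 1 : ℕ) : ℤ)) + (i : ℤ)))⁻¹)
            * ∏ i ∈ Finset.range (n - (k + 1)),
                (1 - q ^ (α + (((k + 1) + i : ℕ) : ℤ))) = 1 := by
          rw [← Finset.prod_mul_distrib]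
          refine Finset.prod_eq_one fun i _ => ?_
          rw [hexp i]
          exact inv_mul_cancel₀ (hW _)
        calc (∏ i ∈ Finset.range (n - (k + 1)),
              (1 - q ^ ((α + ((k + 1 : ℕ) : ℤ)) + (i : ℤ)))⁻¹)
            * ((∏ i ∈ Finset.range (k + 1), (1 - q ^ (α + (i : ℤ))))
              * ∏ i ∈ Finset.range (n - (k + 1)),
                  (1 - q ^ (α + (((k + 1) + i : ℕ) : ℤ))))
            = (∏ i ∈ Finset.range (k + 1), (1 - q ^ (α + (i : ℤ))))
              * ((∏ i ∈ Finset.range (n - (k + 1)),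
                  (1 - q ^ ((α + ((k + 1 : ℕ) : ℤ)) + (i : ℤ)))⁻¹)
                * ∏ i ∈ Finset.range (n - (k + 1)),
                    (1 - q ^ (α + (((k + 1) + i : ℕ) : ℤ)))) := by ring
          _ = ∏ i ∈ Finset.range (k + 1), (1 - q ^ (α + (i : ℤ))) := by
              rw [hcancel, mul_one]
      -- Pprod identification
      have hPp : ∏ i ∈ Finset.range (k + 1), (1 - q ^ (α + (i : ℤ)))
          = Pprod q (q ^ α) (k + 1) := by
        unfold Pprod
        refine Finset.prod_congr rfl fun i _ => ?_
        rw [zpow_add₀ hq0, zpow_natCast]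
      rw [mul_assoc, hprod, hcoeff, hPp]
    rw [Finset.sum_mul, Finset.sum_congr rfl hterm]
    -- use the key identity
    have hkey := key_identity hq (q ^ α) n
    rw [Finset.sum_range_succ'] at hkey
    rw [Dq_zero_right hq, Pprod_zero, Nat.sub_zero, one_mul, mul_one] at hkey
    have hgoal2 : (∏ i ∈ Finset.range n, (1 - q ^ (α + (i : ℤ)))⁻¹)
        * (1 - q ^ ((α * n).toNat))
        * ∏ i ∈ Finset.range n, (1 - q ^ (α + (i : ℤ)))
        = 1 - (q ^ α) ^ n := by
      rw [hqm]
      calc (∏ i ∈ Finset.range n, (1 - q ^ (α + (i : ℤ)))⁻¹) * (1 - (q ^ α) ^ n)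
            * ∏ i ∈ Finset.range n, (1 - q ^ (α + (i : ℤ)))
          = (1 - (q ^ α) ^ n) * ((∏ i ∈ Finset.range n, (1 - q ^ (α + (i : ℤ)))⁻¹)
              * ∏ i ∈ Finset.range n, (1 - q ^ (α + (i : ℤ)))) := by ring
        _ = 1 - (q ^ α) ^ n := by rw [hPinvW, mul_one]
    rw [hgoal2]
    linarith [hkey]
  rw [← hconst]
  exact hsolve

end Main


/-- **Constant term of the expansion of `vol_{n,α}` for `α ≥ 1`.** For `q > 1`, `n ≥ 0` and
`α ≥ 1`, the function `x ↦ vol_{n,α}(x)` admits a `q`-quasi-polynomial expansion whose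
coefficient at `q^{a x} x^b` vanishes unless `a ≥ 1` or `(a,b) = (0,0)`, and whose constant
coefficient is `c(0,0) = ∏_{i=0}^{n−1} (1 − q^{α+i})⁻¹`. -/
theorem vol_constant_coeff (q : ℝ) (hq : 1 < q) (n : ℕ) (α : ℤ) (hα : 1 ≤ α) :
    ∃ c : (ℕ × ℕ) →₀ ℝ,
      (∀ a b : ℕ, c (a, b) ≠ 0 → 1 ≤ a ∨ (a, b) = (0, 0)) ∧
      c (0, 0) = ∏ i ∈ Finset.range n, (1 - q ^ (α + (i : ℤ)))⁻¹ ∧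
      ∀ x : ℕ, 1 ≤ x → vol q n α x = qQuasiEval q c x := by
  obtain ⟨c, h1, h2, h3⟩ := vol_QP hq n α hα
  exact ⟨c, h1, h2, h3⟩
end KeyIdentity
end

section
/- Fix a real number q > 1. For all integers n ≥ 0, α, and x ≥ 0, the functional equation vol_{n,α}(x) = q^{n·α·x} · vol_{n,−α}(x) holds. -/
open Finset

namespace VolFE

variable {q : ℝ}

def flipT (x : ℕ) {n : ℕ} (l : Fin n → ℤ) : Fin n → ℤ :=
  fun i => (x : ℤ) - l i.rev

lemma mem_tuples {n x : ℕ} {l : Fin n → ℤ} :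
    l ∈ tuples n x ↔ (∀ i, 0 ≤ l i ∧ l i ≤ (x : ℤ)) ∧ Monotone l := by
  classical
  simp [tuples, Fintype.mem_piFinset, Finset.mem_Icc]

lemma flipT_mem {n x : ℕ} {l : Fin n → ℤ} (h : l ∈ tuples n x) :
    flipT x l ∈ tuples n x := by
  rw [mem_tuples] at h ⊢
  obtain ⟨hb, hm⟩ := h
  refine ⟨fun i => ?_, fun i j hij => ?_⟩
  · have := hb i.rev; simp only [flipT]; omega
  · have h1 : j.rev ≤ i.rev := Fin.rev_le_rev.mpr hij
    have := hm h1
    simp only [flipT]; omega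

lemma flipT_flipT {n x : ℕ} (l : Fin n → ℤ) : flipT x (flipT x l) = l := by
  funext i; simp [flipT, Fin.rev_rev]

lemma sum_flipT {n x : ℕ} (l : Fin n → ℤ) :
    ∑ i, flipT x l i = (n : ℤ) * x - ∑ i, l i := by
  have h1 : ∑ i : Fin n, l i.rev = ∑ i : Fin n, l i := Equiv.sum_comp Fin.revPerm l
  simp [flipT, Finset.sum_sub_distrib, h1, mul_comm]

lemma typeProd_flipT {n x : ℕ} (l : Fin n → ℤ) :
    typeProd q (flipT x l) = typeProd q l := by
  classical
  unfold typeProd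
  refine Finset.prod_nbij' (i := fun v => (x : ℤ) - v) (j := fun v => (x : ℤ) - v)
    ?_ ?_ ?_ ?_ ?_
  · intro v hv
    simp only [Finset.mem_image, Finset.mem_univ, true_and] at hv ⊢
    obtain ⟨i, hi⟩ := hv
    exact ⟨i.rev, by simp [flipT] at hi; omega⟩
  · intro v hv
    simp only [Finset.mem_image, Finset.mem_univ, true_and] at hv ⊢
    obtain ⟨i, hi⟩ := hv
    exact ⟨i.rev, by simp [flipT, Fin.rev_rev]; omega⟩
  · intro v _; ring
  · intro v _; ring
  · intro v _
    congr 1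
    refine Finset.card_nbij' (i := fun p => p.rev) (j := fun p => p.rev) ?_ ?_ ?_ ?_
    · intro a ha
      rw [Finset.mem_coe, Finset.mem_filter] at ha ⊢
      simp only [Finset.mem_filter, Finset.mem_univ, true_and, flipT] at ha ⊢
      omega
    · intro a ha
      rw [Finset.mem_coe, Finset.mem_filter] at ha ⊢
      simp only [Finset.mem_filter, Finset.mem_univ, true_and, flipT, Fin.rev_rev] at ha ⊢
      omega
    · intro a _; simp [Fin.rev_rev]
    · intro a _; simp [Fin.rev_rev]

lemma pairProd_flipT {n x : ℕ} (hq0 : q ≠ 0) (l : Fin n → ℤ) :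
    (∏ p ∈ Finset.univ.filter (fun p : Fin n × Fin n => p.1 < p.2),
      q ^ (flipT x l p.2 - flipT x l p.1)) =
    ∏ p ∈ Finset.univ.filter (fun p : Fin n × Fin n => p.1 < p.2), q ^ (l p.2 - l p.1) := by
  refine Finset.prod_nbij' (i := fun p : Fin n × Fin n => (p.2.rev, p.1.rev))
    (j := fun p : Fin n × Fin n => (p.2.rev, p.1.rev)) ?_ ?_ ?_ ?_ ?_
  · intro p hp
    simp only [Finset.mem_filter, Finset.mem_univ, true_and] at hp ⊢
    exact Fin.rev_lt_rev.mpr hp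
  · intro p hp
    simp only [Finset.mem_filter, Finset.mem_univ, true_and] at hp ⊢
    exact Fin.rev_lt_rev.mpr hp
  · intro p _; simp [Fin.rev_rev]
  · intro p _; simp [Fin.rev_rev]
  · intro p _
    simp only [flipT]
    congr 1
    ring

lemma weight_flipT {n x : ℕ} (hq0 : q ≠ 0) (l : Fin n → ℤ) :
    weight q (flipT x l) = weight q l := by
  unfold weight
  rw [typeProd_flipT, pairProd_flipT hq0]

end VolFE

/-- **Functional equation for `vol_{n,α}`.** For `q > 1` and all integers `n ≥ 0`, `α`, and
`x ≥ 0`: `vol_{n,α}(x) = q^{nαx} · vol_{n,−α}(x)`. -/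


theorem vol_functional_equation (q : ℝ) (hq : 1 < q) (n : ℕ) (α : ℤ) (x : ℕ) :
    vol q n α x = q ^ ((n : ℤ) * α * (x : ℤ)) * vol q n (-α) x := by
  have hq0 : q ≠ 0 := ne_of_gt (lt_trans one_pos hq)
  unfold vol
  rw [Finset.mul_sum]
  refine Finset.sum_nbij' (i := fun l => VolFE.flipT x l) (j := fun l => VolFE.flipT x l)
    (fun l hl => VolFE.flipT_mem hl) (fun l hl => VolFE.flipT_mem hl)
    (fun l _ => VolFE.flipT_flipT l) (fun l _ => VolFE.flipT_flipT l) ?_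
  intro l hl
  rw [VolFE.weight_flipT hq0, VolFE.sum_flipT]
  rw [← mul_assoc, ← zpow_add₀ hq0]
  congr 2
  ring
end
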